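/- Let G = (V,E) be a finite simple graph, k ≥ 1 an integer, and v a large-sparse vertex of G. Let B ⊆ V \ {v} with |B| ≤ 2k be such that no cycle of G − B passes through v. Let C be a connected component of G − ({v} ∪ B) such that the subgraph induced by C is a tree, C contains a neighbor of v, and no vertex of C has a neighbor in B. Then (G,k) admits a feasible solution if and only if (G − C, k) admits a feasible solution, where G − C is the subgraph of G induced by V \ C. -/

import Mathlib

open SimpleGraph

/-- The number of edges of `G` with both endpoints in the neighborhood of `v`. -/
noncomputable def rho {V : Type*} (G : SimpleGraph V) (v : V) : ℕ :=
  {e : Sym2 V | e ∈ G.edgeSet ∧ ∀ x ∈ e, G.Adj v x}.ncard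

/-- `v` is large-sparse: `|N(v)| > 7k` and `ρ(v) ≤ |N(v)|(|N(v)|−1)/4`. -/
def LargeSparse {V : Type*} (G : SimpleGraph V) (k : ℕ) (v : V) : Prop :=
  7 * k < (G.neighborSet v).ncard ∧
    4 * rho G v ≤ (G.neighborSet v).ncard * ((G.neighborSet v).ncard - 1)

/-- `v` is large-dense: `|N(v)| > 7k` and `ρ(v) > |N(v)|(|N(v)|−1)/4`. -/
def LargeDense {V : Type*} (G : SimpleGraph V) (k : ℕ) (v : V) : Prop :=
  7 * k < (G.neighborSet v).ncard ∧
    (G.neighborSet v).ncard * ((G.neighborSet v).ncard - 1) < 4 * rho G v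

/-- The connected component `c` of `H` is a clique. -/
def CompIsClique {W : Type*} (H : SimpleGraph W) (c : H.ConnectedComponent) : Prop :=
  H.IsClique c.supp

/-- The connected component `c` of `H` is a tree. -/
def CompIsTree {W : Type*} (H : SimpleGraph W) (c : H.ConnectedComponent) : Prop :=
  (H.induce c.supp).IsTree

/-- Every connected component of `H` is a clique or a tree. -/
def CliquesOrTrees {W : Type*} (H : SimpleGraph W) : Prop :=
  ∀ c : H.ConnectedComponent, CompIsClique H c ∨ CompIsTree H c

/-- `X` is a feasible solution for `(G, k)`: `|X| ≤ k` and every connected component of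
`G − X` is a clique or a tree. -/
def IsFeasible {V : Type*} (G : SimpleGraph V) (k : ℕ) (X : Set V) : Prop :=
  X.ncard ≤ k ∧ CliquesOrTrees (G.induce (Xᶜ : Set V))

namespace StmtAux

variable {V : Type*} {W : Type*} {W' : Type*}

/-- Transfer a walk into an induced subgraph containing its support. -/
def toInduceW {H : SimpleGraph W} {T : Set W} :
    ∀ {a b : W} (p : H.Walk a b), (∀ x ∈ p.support, x ∈ T) →
      ∀ (ha : a ∈ T) (hb : b ∈ T), (H.induce T).Walk ⟨a, ha⟩ ⟨b, hb⟩
  | _, _, Walk.nil, _, _, _ => Walk.nil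
  | _, _, Walk.cons h q, hs, ha, hb =>
      Walk.cons (by simpa using h)
        (toInduceW q (fun x hx => hs x (by simp [hx])) (hs _ (by simp)) hb)

lemma map_toInduceW {H : SimpleGraph W} {T : Set W} {a b : W} (p : H.Walk a b)
    (hs : ∀ x ∈ p.support, x ∈ T) (ha : a ∈ T) (hb : b ∈ T) :
    (toInduceW p hs ha hb).map (SimpleGraph.Embedding.induce T).toHom = p := by
  induction p with
  | nil => rfl
  | cons h q ih =>
    simp only [toInduceW, Walk.map_cons]
    exact congrArg (Walk.cons h) (ih _ _ _)

lemma support_toInduceW {H : SimpleGraph W} {T : Set W} {a b : W} (p : H.Walk a b)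
    (hs : ∀ x ∈ p.support, x ∈ T) (ha : a ∈ T) (hb : b ∈ T) :
    ∀ x ∈ (toInduceW p hs ha hb).support, (x : W) ∈ p.support := by
  intro x hx
  have h := congrArg Walk.support (map_toInduceW p hs ha hb)
  rw [Walk.support_map] at h
  exact cast (congrArg (fun l => (x : W) ∈ l) h) (List.mem_map.mpr ⟨x, hx, rfl⟩)

lemma isCycle_toInduceW {H : SimpleGraph W} {T : Set W} {a : W} (p : H.Walk a a)
    (hs : ∀ x ∈ p.support, x ∈ T) (ha : a ∈ T) (hp : p.IsCycle) :
    (toInduceW p hs ha ha).IsCycle := by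
  rw [← Walk.map_isCycle_iff_of_injective (f := (SimpleGraph.Embedding.induce T).toHom)
    Subtype.val_injective, map_toInduceW]
  exact hp

/-- Transfer a walk between two induced subgraphs of the same graph. -/
def transferIW {G : SimpleGraph V} {A A' : Set V} {a b : ↥A} (p : (G.induce A).Walk a b)
    (hs : ∀ x ∈ p.support, (x : V) ∈ A') (ha : (a : V) ∈ A') (hb : (b : V) ∈ A') :
    (G.induce A').Walk ⟨a, ha⟩ ⟨b, hb⟩ :=
  toInduceW (p.map (SimpleGraph.Embedding.induce A).toHom)
    (by
      intro x hx
      rw [Walk.support_map] at hx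
      obtain ⟨y, hy, rfl⟩ := List.mem_map.mp hx
      exact hs y hy) ha hb

lemma support_transferIW {G : SimpleGraph V} {A A' : Set V} {a b : ↥A} (p : (G.induce A).Walk a b)
    (hs : ∀ x ∈ p.support, (x : V) ∈ A') (ha : (a : V) ∈ A') (hb : (b : V) ∈ A') :
    ∀ x ∈ (transferIW p hs ha hb).support, ∃ y ∈ p.support, (y : V) = (x : V) := by
  intro x hx
  have := support_toInduceW _ _ ha hb x hx
  have h2 : (x : V) ∈ p.support.map (SimpleGraph.Embedding.induce A).toHom :=
    cast (congrArg (fun l => (x : V) ∈ l) (Walk.support_map ..)) this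
  obtain ⟨y, hy, hyx⟩ := List.mem_map.mp h2
  exact ⟨y, hy, hyx⟩

lemma reachable_of_mem_support {H : SimpleGraph W} {a b x : W} (p : H.Walk a b)
    (hx : x ∈ p.support) : H.Reachable x b := by
  classical
  exact ⟨p.dropUntil x hx⟩

lemma connected_induce_supp {H : SimpleGraph W} (c : H.ConnectedComponent) :
    (H.induce c.supp).Connected := by
  obtain ⟨w, hw⟩ : ∃ w, w ∈ c.supp := c.ind (fun w => ⟨w, rfl⟩)
  rw [connected_iff]
  refine ⟨?_, ⟨⟨w, hw⟩⟩⟩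
  rintro ⟨x, hx⟩ ⟨y, hy⟩
  have hr : H.Reachable x y := ConnectedComponent.exact (hx.trans hy.symm)
  obtain ⟨p⟩ := hr
  refine ⟨toInduceW p (fun z hz => ?_) hx hy⟩
  have : H.Reachable z y := reachable_of_mem_support p hz
  rw [ConnectedComponent.mem_supp_iff, ← hy]
  exact ConnectedComponent.sound this

lemma isAcyclic_of_iso {H : SimpleGraph W} {H' : SimpleGraph W'} (φ : H ≃g H')
    (h : H.IsAcyclic) : H'.IsAcyclic := by
  intro w p hp
  exact h (p.map φ.symm.toHom)
    ((Walk.map_isCycle_iff_of_injective (φ.symm.injective)).mpr hp)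

lemma isTree_of_iso {H : SimpleGraph W} {H' : SimpleGraph W'} (φ : H ≃g H')
    (h : H.IsTree) : H'.IsTree := by
  rw [isTree_iff] at h ⊢
  exact ⟨(φ.connected_iff).mp h.1, isAcyclic_of_iso φ h.2⟩

noncomputable def isoInduceImage {H : SimpleGraph W} {H' : SimpleGraph W'} (φ : H ≃g H')
    (s : Set W) : H.induce s ≃g H'.induce ((fun x => φ x) '' s) where
  toEquiv := φ.toEquiv.image s
  map_rel_iff' := by
    intro a b
    simp only [Equiv.image, Equiv.coe_fn_mk, comap_adj, Function.Embedding.coe_subtype]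
    exact φ.map_adj_iff

noncomputable def isoInduceInduce (G : SimpleGraph V) (A : Set V) (T : Set ↥A) :
    (G.induce A).induce T ≃g G.induce (Subtype.val '' T) where
  toEquiv := Equiv.Set.image Subtype.val T Subtype.val_injective
  map_rel_iff' := Iff.rfl

lemma cliquesOrTrees_of_iso {H : SimpleGraph W} {H' : SimpleGraph W'} (φ : H ≃g H')
    (h : CliquesOrTrees H) : CliquesOrTrees H' := by
  intro c'
  induction c' using SimpleGraph.ConnectedComponent.ind with
  | _ w' =>
  have hsupp : (H'.connectedComponentMk w').supp
      = (fun x => φ x) '' (H.connectedComponentMk (φ.symm w')).supp := by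
    ext x'
    constructor
    · intro hr
      refine ⟨φ.symm x', ?_, by simp⟩
      simp only [ConnectedComponent.mem_supp_iff, ConnectedComponent.eq] at hr ⊢
      exact (Iso.reachable_iff (φ := φ.symm)).mpr hr
    · rintro ⟨x, hx, rfl⟩
      simp only [ConnectedComponent.mem_supp_iff, ConnectedComponent.eq] at hx ⊢
      have := (Iso.reachable_iff (φ := φ)).mpr hx
      simpa using this
  rcases h (H.connectedComponentMk (φ.symm w')) with hcl | htr
  · left
    unfold CompIsClique at hcl ⊢
    rw [hsupp]
    rintro a ⟨a0, ha0, rfl⟩ b ⟨b0, hb0, rfl⟩ hne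
    have hab : H.Adj a0 b0 := hcl ha0 hb0 (fun e => hne (by rw [e]))
    exact φ.map_adj_iff.mpr hab
  · right
    unfold CompIsTree at htr ⊢
    rw [hsupp]
    exact isTree_of_iso (isoInduceImage φ _) htr

lemma cliquesOrTrees_of_connected_acyclic {H : SimpleGraph W} (hc : H.Connected)
    (ha : H.IsAcyclic) : CliquesOrTrees H := by
  intro c
  induction c using SimpleGraph.ConnectedComponent.ind with
  | _ w =>
  right
  unfold CompIsTree
  have hsupp : (H.connectedComponentMk w).supp = Set.univ := by
    ext x
    simp only [Set.mem_univ, iff_true, ConnectedComponent.mem_supp_iff]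
    exact ConnectedComponent.sound (hc.preconnected x w)
  rw [hsupp]
  exact isTree_of_iso (induceUnivIso H).symm ⟨hc, ha⟩

lemma walk_support_closed {G : SimpleGraph V} {S T : Set V}
    (hclosed : ∀ x ∈ T, ∀ y ∈ S, G.Adj x y → y ∈ T) {a b : ↥S}
    (p : (G.induce S).Walk a b) (hb : (b : V) ∈ T) :
    ∀ x ∈ p.support, (x : V) ∈ T := by
  induction p with
  | nil =>
    intro x hx
    rw [Walk.support_nil, List.mem_singleton] at hx
    rw [hx]; exact hb
  | @cons u s e h q ih =>
    intro x hx
    rw [Walk.support_cons, List.mem_cons] at hx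
    rcases hx with rfl | hx
    · have hstart : (s : V) ∈ T := ih hb s q.start_mem_support
      have hadj : G.Adj (s : V) (x : V) := by
        simp only [comap_adj, Function.Embedding.coe_subtype] at h
        exact h.symm
      exact hclosed _ hstart _ x.2 hadj
    · exact ih hb x hx

/-- If every element of `c.supp` maps into `c'.supp`, clique/tree-ness transfers back. -/
lemma comp_transfer {G : SimpleGraph V} {S T : Set V}
    (c : (G.induce S).ConnectedComponent) (c' : (G.induce T).ConnectedComponent)
    (hmem : ∀ x : ↥S, x ∈ c.supp → ∃ h : (x : V) ∈ T, (⟨x, h⟩ : ↥T) ∈ c'.supp) :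
    (CompIsClique _ c' → CompIsClique _ c) ∧ (CompIsTree _ c' → CompIsTree _ c) := by
  constructor
  · intro hcl a ha b hb hne
    obtain ⟨hat, ha'⟩ := hmem a ha
    obtain ⟨hbt, hb'⟩ := hmem b hb
    have hadj : (G.induce T).Adj ⟨a, hat⟩ ⟨b, hbt⟩ :=
      hcl ha' hb' (fun e => hne (Subtype.ext (congrArg (fun z : ↥T => (z : V)) e)))
    simp only [comap_adj, Function.Embedding.coe_subtype] at hadj ⊢
    exact hadj
  · intro htr
    refine ⟨connected_induce_supp c, ?_⟩
    set f : ((G.induce S).induce c.supp) →g ((G.induce T).induce c'.supp) :=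
      { toFun := fun x => ⟨⟨(x : ↥S), (hmem x x.2).1⟩, (hmem x x.2).2⟩
        map_rel' := fun h => h } with hf
    have hinj : Function.Injective f := by
      intro x y hxy
      apply Subtype.ext; apply Subtype.ext
      exact congrArg (fun z : ↥(c'.supp) => ((z : ↥T) : V)) hxy
    intro w p hp
    exact ((isTree_iff _).mp htr).2 (p.map f) ((Walk.map_isCycle_iff_of_injective hinj).mpr hp)

lemma cliquesOrTrees_mono {G : SimpleGraph V} {S' S : Set V} (hsub : S' ⊆ S)
    (h : CliquesOrTrees (G.induce S)) : CliquesOrTrees (G.induce S') := by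
  intro c'
  induction c' using SimpleGraph.ConnectedComponent.ind with
  | _ w =>
  have key : ∀ x : ↥S', x ∈ ((G.induce S').connectedComponentMk w).supp →
      ∃ h : (x : V) ∈ S,
        (⟨x, h⟩ : ↥S) ∈ ((G.induce S).connectedComponentMk ⟨↑w, hsub w.2⟩).supp := by
    intro x hx
    refine ⟨hsub x.2, ?_⟩
    rw [ConnectedComponent.mem_supp_iff] at hx ⊢
    obtain ⟨p⟩ := ConnectedComponent.exact hx
    exact ConnectedComponent.sound ⟨transferIW p (fun z _ => hsub z.2) _ _⟩
  rcases h ((G.induce S).connectedComponentMk ⟨↑w, hsub w.2⟩) with hcl | htr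
  · exact Or.inl ((comp_transfer _ _ key).1 hcl)
  · exact Or.inr ((comp_transfer _ _ key).2 htr)

lemma comp_of_closed {G : SimpleGraph V} {S T : Set V} (hTS : T ⊆ S)
    (hclosed : ∀ x ∈ T, ∀ y ∈ S, G.Adj x y → y ∈ T)
    (hT : CliquesOrTrees (G.induce T)) (w : ↥S) (hw : (w : V) ∈ T) :
    CompIsClique _ ((G.induce S).connectedComponentMk w) ∨
      CompIsTree _ ((G.induce S).connectedComponentMk w) := by
  have hwalk := fun {a : ↥S} (p : (G.induce S).Walk a w) =>
    walk_support_closed hclosed p hw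
  have key : ∀ x : ↥S, x ∈ ((G.induce S).connectedComponentMk w).supp →
      ∃ h : (x : V) ∈ T, (⟨x, h⟩ : ↥T) ∈ ((G.induce T).connectedComponentMk ⟨↑w, hw⟩).supp := by
    intro x hx
    rw [ConnectedComponent.mem_supp_iff] at hx
    obtain ⟨p⟩ := ConnectedComponent.exact hx
    have hsub := hwalk p
    refine ⟨hsub x p.start_mem_support, ?_⟩
    rw [ConnectedComponent.mem_supp_iff]
    exact ConnectedComponent.sound ⟨transferIW p hsub _ _⟩
  rcases hT ((G.induce T).connectedComponentMk ⟨↑w, hw⟩) with hcl | htr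
  · exact Or.inl ((comp_transfer _ _ key).1 hcl)
  · exact Or.inr ((comp_transfer _ _ key).2 htr)

lemma cliquesOrTrees_union {G : SimpleGraph V} {S1 S2 : Set V}
    (hsep : ∀ x ∈ S1, ∀ y ∈ S2, ¬ G.Adj x y)
    (h1 : CliquesOrTrees (G.induce S1)) (h2 : CliquesOrTrees (G.induce S2)) :
    CliquesOrTrees (G.induce (S1 ∪ S2)) := by
  intro cc
  induction cc using SimpleGraph.ConnectedComponent.ind with
  | _ w =>
  rcases w.2 with hw | hw
  · refine comp_of_closed Set.subset_union_left ?_ h1 w hw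
    intro x hx y hy hadj
    rcases hy with hy | hy
    · exact hy
    · exact absurd hadj (hsep x hx y hy)
  · refine comp_of_closed Set.subset_union_right ?_ h2 w hw
    intro x hx y hy hadj
    rcases hy with hy | hy
    · exact absurd hadj.symm (hsep y hy x hx)
    · exact hy

lemma crossDart {G : SimpleGraph V} {T U : Set V} (hd : ∀ x, x ∈ T → x ∈ U → False)
    {a b : V} (p : G.Walk a b) (hs : ∀ x ∈ p.support, x ∈ T ∨ x ∈ U)
    (ha : a ∈ T) (hb : b ∈ U) :
    ∃ d ∈ p.darts, d.fst ∈ T ∧ d.snd ∈ U := by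
  induction p with
  | nil => exact absurd hb (fun hb => hd _ ha hb)
  | @cons u s e h q ih =>
    rcases hs s (by simp) with hT | hU
    · obtain ⟨d, hd', hdt⟩ := ih (fun x hx => hs x (by simp [hx])) hT hb
      exact ⟨d, by simp [Walk.darts_cons, hd'], hdt⟩
    · exact ⟨⟨(u, s), h⟩, by simp [Walk.darts_cons], ha, hU⟩

lemma isAcyclic_glue {G : SimpleGraph V} {S1 S2 : Set V} {a b : V}
    (hd : ∀ x, x ∈ S1 → x ∈ S2 → False)
    (hcross : ∀ x ∈ S1, ∀ y ∈ S2, G.Adj x y → x = a ∧ y = b)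
    (h1 : (G.induce S1).IsAcyclic) (h2 : (G.induce S2).IsAcyclic) :
    (G.induce (S1 ∪ S2)).IsAcyclic := by
  classical
  intro w p hp
  set q := p.map (SimpleGraph.Embedding.induce (S1 ∪ S2)).toHom with hq
  have hqc : q.IsCycle :=
    (Walk.map_isCycle_iff_of_injective Subtype.val_injective).mpr hp
  have hqs : ∀ x ∈ q.support, x ∈ S1 ∨ x ∈ S2 := by
    intro x hx
    rw [hq, Walk.support_map] at hx
    obtain ⟨y, hy, rfl⟩ := List.mem_map.mp hx
    exact y.2
  by_cases hall1 : ∀ x ∈ q.support, x ∈ S1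
  · exact h1 (toInduceW q hall1 (hall1 _ q.start_mem_support) (hall1 _ q.start_mem_support))
      (isCycle_toInduceW q hall1 _ hqc)
  by_cases hall2 : ∀ x ∈ q.support, x ∈ S2
  · exact h2 (toInduceW q hall2 (hall2 _ q.start_mem_support) (hall2 _ q.start_mem_support))
      (isCycle_toInduceW q hall2 _ hqc)
  push_neg at hall1 hall2
  obtain ⟨z1, hz1s, hz1⟩ := hall1
  obtain ⟨z2, hz2s, hz2⟩ := hall2
  have hz1' : z1 ∈ S2 := (hqs z1 hz1s).resolve_left hz1
  have hz2' : z2 ∈ S1 := (hqs z2 hz2s).resolve_right hz2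
  have hmain : ∃ d1 ∈ q.darts, ∃ d2 ∈ q.darts,
      (d1.fst ∈ S1 ∧ d1.snd ∈ S2) ∧ (d2.fst ∈ S2 ∧ d2.snd ∈ S1) := by
    rcases hqs _ q.start_mem_support with hw | hw
    · have h1' := crossDart hd (q.takeUntil z1 hz1s)
        (fun x hx => hqs x (q.support_takeUntil_subset hz1s hx)) hw hz1'
      have h2' := crossDart (fun x h2 h1 => hd x h1 h2) (q.dropUntil z1 hz1s)
        (fun x hx => (hqs x (q.support_dropUntil_subset hz1s hx)).symm) hz1' hw
      obtain ⟨d1, hd1, hd1'⟩ := h1'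
      obtain ⟨d2, hd2, hd2'⟩ := h2'
      exact ⟨d1, q.darts_takeUntil_subset hz1s hd1, d2, q.darts_dropUntil_subset hz1s hd2,
        hd1', ⟨hd2'.1, hd2'.2⟩⟩
    · have h1' := crossDart (fun x h2 h1 => hd x h1 h2) (q.takeUntil z2 hz2s)
        (fun x hx => (hqs x (q.support_takeUntil_subset hz2s hx)).symm) hw hz2'
      have h2' := crossDart hd (q.dropUntil z2 hz2s)
        (fun x hx => hqs x (q.support_dropUntil_subset hz2s hx)) hz2' hw
      obtain ⟨d1, hd1, hd1'⟩ := h1'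
      obtain ⟨d2, hd2, hd2'⟩ := h2'
      exact ⟨d2, q.darts_dropUntil_subset hz2s hd2, d1, q.darts_takeUntil_subset hz2s hd1,
        hd2', hd1'⟩
  obtain ⟨d1, hd1m, d2, hd2m, ⟨h1f, h1s⟩, ⟨h2f, h2s⟩⟩ := hmain
  have he1 : d1.fst = a ∧ d1.snd = b := hcross _ h1f _ h1s d1.adj
  have he2 : d2.snd = a ∧ d2.fst = b := hcross _ h2s _ h2f d2.adj.symm
  have hedge1 : d1.edge = s(a, b) := by
    rw [← he1.1, ← he1.2]; rfl
  have hedge2 : d2.edge = s(a, b) := by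
    rw [← he2.1, ← he2.2, Sym2.eq_swap]; rfl
  have hane : a ≠ b := fun e => hd a (he1.1 ▸ h1f) (e ▸ (he1.2 ▸ h1s))
  have hne : d1 ≠ d2 := fun e =>
    hane ((he1.1).symm.trans ((congrArg (fun d : G.Dart => d.fst) e).trans he2.2))
  have hnodup : q.edges.Nodup := hqc.edges_nodup
  have : d1 = d2 := by
    have hmapn : (q.darts.map SimpleGraph.Dart.edge).Nodup := by
      have h : q.edges = q.darts.map SimpleGraph.Dart.edge := rfl
      rwa [h] at hnodup
    exact List.inj_on_of_nodup_map hmapn hd1m hd2m (hedge1.trans hedge2.symm)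
  exact hne this

lemma no_vpath {G : SimpleGraph V} {B : Set V} {v : V}
    (hnocycle : ∀ (w : ↥(Bᶜ : Set V)) (p : (G.induce (Bᶜ : Set V)).Walk w w),
      p.IsCycle → ∀ x ∈ p.support, (x : V) ≠ v)
    (hvB : v ∈ (Bᶜ : Set V)) {x y : ↥(Bᶜ : Set V)}
    (hxy : x ≠ y) (hvx : G.Adj v ↑x) (hvy : G.Adj v ↑y)
    (p : (G.induce (Bᶜ : Set V)).Walk x y) (hav : ∀ z ∈ p.support, (z : V) ≠ v) :
    False := by
  classical
  let v' : ↥(Bᶜ : Set V) := ⟨v, hvB⟩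
  let p0 : (G.induce (Bᶜ : Set V)).Walk x y := (p.toPath : (G.induce (Bᶜ : Set V)).Path x y)
  have hp0 : p0.IsPath := p.toPath.2
  have hav0 : ∀ z ∈ p0.support, (z : V) ≠ v :=
    fun z hz => hav z (Walk.support_toPath_subset p hz)
  have hvx' : (G.induce (Bᶜ : Set V)).Adj v' x := by
    simp only [comap_adj, Function.Embedding.coe_subtype]
    exact hvx
  have hvy' : (G.induce (Bᶜ : Set V)).Adj y v' := by
    simp only [comap_adj, Function.Embedding.coe_subtype]
    exact hvy.symm
  have hvns : v' ∉ p0.support := fun hmem => hav0 v' hmem rfl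
  have hp1 : (Walk.cons hvx' p0).IsPath := hp0.cons hvns
  have hcyc : (Walk.cons hvy' (Walk.cons hvx' p0)).IsCycle := by
    apply Path.cons_isCycle ⟨Walk.cons hvx' p0, hp1⟩ hvy'
    intro hmem
    rw [Walk.edges_cons, List.mem_cons] at hmem
    rcases hmem with heq | hmem'
    · rcases Sym2.eq_iff.mp heq with ⟨h1, _⟩ | ⟨h1, _⟩
      · apply G.loopless.irrefl v
        have h1' : (y : V) = v := congrArg Subtype.val h1
        rw [h1'] at hvy; exact hvy
      · exact hxy h1.symm
    · exact hvns (Walk.snd_mem_support_of_mem_edges _ hmem')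
  exact hnocycle y _ hcyc v' (by simp [Walk.support_cons]) rfl

end StmtAux

open StmtAux in
/-- let `v` be large-sparse, `B ⊆ V \ {v}` with `|B| ≤ 2k` such that no cycle
of `G − B` passes through `v`, and let `C` be a connected component of `G − ({v} ∪ B)`
inducing a tree, containing a neighbor of `v`, and with no vertex having a neighbor in `B`.
Then `(G,k)` is feasible iff `(G − C, k)` is feasible. -/
theorem stmt_6 {V : Type*} [Fintype V] (G : SimpleGraph V) (k : ℕ) (hk : 1 ≤ k) (v : V)
    (hv : LargeSparse G k v) (B : Set V) (hvB : v ∉ B) (hBcard : B.ncard ≤ 2 * k)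
    (hnocycle : ∀ (w : ↥(Bᶜ : Set V)) (p : (G.induce (Bᶜ : Set V)).Walk w w),
      p.IsCycle → ∀ x ∈ p.support, (x : V) ≠ v)
    (c : (G.induce (({v} ∪ B)ᶜ : Set V)).ConnectedComponent)
    (htree : CompIsTree (G.induce (({v} ∪ B)ᶜ : Set V)) c)
    (hnbr : ∃ u ∈ c.supp, G.Adj v (u : V))
    (hnoB : ∀ u ∈ c.supp, ∀ b ∈ B, ¬ G.Adj (u : V) b) :
    (∃ X : Set V, IsFeasible G k X) ↔
      (∃ Y : Set ↥((Subtype.val '' c.supp)ᶜ : Set V),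
        IsFeasible (G.induce ((Subtype.val '' c.supp)ᶜ : Set V)) k Y) := by
  classical
  set Cv : Set V := Subtype.val '' c.supp with hCv
  set K : Set V := Cvᶜ with hK
  obtain ⟨u0, hu0c, hu0adj⟩ := hnbr
  have hvD : v ∉ (({v} ∪ B)ᶜ : Set V) := fun h => h (Or.inl rfl)
  have hDB : (({v} ∪ B)ᶜ : Set V) ⊆ (Bᶜ : Set V) := fun z hz hzB => hz (Or.inr hzB)
  have hvBc : v ∈ (Bᶜ : Set V) := hvB
  have hvK : v ∈ K := by
    rintro ⟨v', hv', he⟩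
    have hv2 := v'.2
    rw [he] at hv2
    exact hvD hv2
  have huCv : (u0 : V) ∈ Cv := ⟨u0, hu0c, rfl⟩
  have hclose : ∀ x ∈ Cv, ∀ y : V, G.Adj x y → y ∈ Cv ∨ y = v := by
    rintro x ⟨x', hx', rfl⟩ y hadj
    by_cases hyv : y = v
    · exact Or.inr hyv
    have hyB : y ∉ B := fun hyB => hnoB x' hx' y hyB hadj
    have hyD : y ∈ (({v} ∪ B)ᶜ : Set V) := by
      intro hmem
      rcases hmem with h | h
      · exact hyv h
      · exact hyB h
    refine Or.inl ⟨⟨y, hyD⟩, ?_, rfl⟩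
    have hadj' : (G.induce (({v} ∪ B)ᶜ : Set V)).Adj ⟨y, hyD⟩ x' := by
      simp only [comap_adj, Function.Embedding.coe_subtype]; exact hadj.symm
    rw [ConnectedComponent.mem_supp_iff]
    exact (ConnectedComponent.sound hadj'.reachable).trans hx'
  have huniq : ∀ y ∈ Cv, G.Adj v y → y = (u0 : V) := by
    rintro y ⟨y', hy', rfl⟩ hadj
    by_contra hne
    have hyc : (G.induce (({v} ∪ B)ᶜ : Set V)).connectedComponentMk y' = c := hy'
    have huc : (G.induce (({v} ∪ B)ᶜ : Set V)).connectedComponentMk u0 = c := hu0c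
    obtain ⟨p⟩ := ConnectedComponent.exact (hyc.trans huc.symm)
    apply no_vpath hnocycle hvBc (x := ⟨↑y', hDB y'.2⟩) (y := ⟨↑u0, hDB u0.2⟩)
      (fun e => hne (congrArg (fun t : ↥(Bᶜ : Set V) => (t : V)) e)) hadj hu0adj
      (transferIW p (fun z _ => hDB z.2) (hDB y'.2) (hDB u0.2))
    intro z hz
    obtain ⟨t, ht, hteq⟩ := support_transferIW p _ _ _ z hz
    rw [← hteq]
    intro he
    have ht2 := t.2
    rw [he] at ht2
    exact hvD ht2
  have htreeCv : (G.induce Cv).IsTree := by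
    unfold CompIsTree at htree
    exact isTree_of_iso (isoInduceInduce G (({v} ∪ B)ᶜ : Set V) c.supp) htree
  have himg : ∀ Y : Set ↥K, Subtype.val '' (Yᶜ : Set ↥K) = K ∩ (Subtype.val '' Y)ᶜ := by
    intro Y; ext z
    simp only [Set.mem_image, Set.mem_inter_iff, Set.mem_compl_iff]
    constructor
    · rintro ⟨z', hz', rfl⟩
      refine ⟨z'.2, ?_⟩
      rintro ⟨z'', hz'', he⟩
      exact hz' (by rwa [Subtype.ext he] at hz'')
    · rintro ⟨hzK, hzX⟩
      exact ⟨⟨z, hzK⟩, fun hmem => hzX ⟨⟨z, hzK⟩, hmem, rfl⟩, rfl⟩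
  constructor
  · rintro ⟨X, hXc, hXg⟩
    refine ⟨Subtype.val ⁻¹' X, ?_, ?_⟩
    · calc (Subtype.val ⁻¹' X : Set ↥K).ncard
          = (Subtype.val '' (Subtype.val ⁻¹' X : Set ↥K)).ncard :=
            (Set.ncard_image_of_injective _ Subtype.val_injective).symm
        _ ≤ X.ncard := Set.ncard_le_ncard (Set.image_preimage_subset _ _) X.toFinite
        _ ≤ k := hXc
    · apply cliquesOrTrees_of_iso (isoInduceInduce G K ((Subtype.val ⁻¹' X : Set ↥K)ᶜ)).symm
      apply cliquesOrTrees_mono ?_ hXg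
      rintro z ⟨z', hz', rfl⟩
      exact hz'
  · rintro ⟨Y, hYc, hYg⟩
    set X : Set V := Subtype.val '' Y with hX
    have hXK : X ⊆ K := by rintro z ⟨z', _, rfl⟩; exact z'.2
    have hXc : X.ncard ≤ k := by
      rw [hX, Set.ncard_image_of_injective _ Subtype.val_injective]; exact hYc
    have hWg : CliquesOrTrees (G.induce (K ∩ Xᶜ)) := by
      have h := cliquesOrTrees_of_iso (isoInduceInduce G K (Yᶜ : Set ↥K)) hYg
      rwa [himg Y] at h
    have hXcomp : Xᶜ = (K ∩ Xᶜ) ∪ Cv := by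
      ext z
      constructor
      · intro hz
        by_cases hzC : z ∈ Cv
        · exact Or.inr hzC
        · exact Or.inl ⟨hzC, hz⟩
      · rintro (⟨_, hz⟩ | hz)
        · exact hz
        · exact fun hzX => (hXK hzX) hz
    refine ⟨X, hXc, ?_⟩
    rw [hXcomp]
    by_cases hvX : v ∈ X
    · apply cliquesOrTrees_union ?_ hWg
        (cliquesOrTrees_of_connected_acyclic ((isTree_iff _).mp htreeCv).1
          ((isTree_iff _).mp htreeCv).2)
      intro x hx y hy hadj
      rcases hclose y hy x hadj.symm with hxC | hxv
      · exact hx.1 hxC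
      · rw [hxv] at hx; exact hx.2 hvX
    · have hvW : v ∈ K ∩ Xᶜ := ⟨hvK, hvX⟩
      set Ws : Set V := K ∩ Xᶜ with hWsdef
      set vW : ↥Ws := ⟨v, hvW⟩ with hvWdef
      set d := (G.induce Ws).connectedComponentMk vW with hd
      set Dv : Set V := Subtype.val '' d.supp with hDvdef
      have hvDv : v ∈ Dv := ⟨vW, hd.symm, rfl⟩
      have hDvW : Dv ⊆ Ws := by rintro z ⟨z', _, rfl⟩; exact z'.2
      have hDvClose : ∀ z ∈ Ws, ∀ x ∈ Dv, G.Adj z x → z ∈ Dv := by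
        rintro z hz x ⟨x', hx', rfl⟩ hadj
        refine ⟨⟨z, hz⟩, ?_, rfl⟩
        rw [ConnectedComponent.mem_supp_iff]
        have hadj' : (G.induce Ws).Adj ⟨z, hz⟩ x' := by
          simp only [comap_adj, Function.Embedding.coe_subtype]; exact hadj
        exact (ConnectedComponent.sound hadj'.reachable).trans hx'
      rcases hWg d with hclq | htrd
      · exfalso
        have hadjDv : ∀ x ∈ Dv, ∀ y ∈ Dv, x ≠ y → G.Adj x y := by
          rintro x ⟨x', hx', rfl⟩ y ⟨y', hy', rfl⟩ hne
          have h := hclq hx' hy' (fun e => hne (congrArg Subtype.val e))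
          simp only [comap_adj, Function.Embedding.coe_subtype] at h
          exact h
        have hsub : G.neighborSet v ⊆ ((Dv \ {v}) ∪ (G.neighborSet v ∩ Cv)) ∪ X := by
          intro x hx
          by_cases hxC : x ∈ Cv
          · exact Or.inl (Or.inr ⟨hx, hxC⟩)
          by_cases hxX : x ∈ X
          · exact Or.inr hxX
          have hxW : x ∈ Ws := ⟨hxC, hxX⟩
          have hadj : G.Adj v x := hx
          have hxD : x ∈ Dv := hDvClose x hxW v hvDv hadj.symm
          exact Or.inl (Or.inl ⟨hxD, fun h => hadj.ne' h⟩)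
        have h1 : (G.neighborSet v ∩ Cv).ncard ≤ 1 := by
          refine (Set.ncard_le_one (Set.toFinite _)).mpr ?_
          rintro a ⟨ha1, ha2⟩ b ⟨hb1, hb2⟩
          rw [huniq a ha2 ha1, huniq b hb2 hb1]
        have hsing : ((Dv \ {v}) \ B).ncard ≤ 1 := by
          refine (Set.ncard_le_one (Set.toFinite _)).mpr ?_
          rintro a ⟨⟨haD, hav⟩, haB⟩ b ⟨⟨hbD, hbv⟩, hbB⟩
          by_contra hne
          have hab : G.Adj a b := hadjDv a haD b hbD hne
          have hva : G.Adj v a := hadjDv v hvDv a haD (fun e => hav e.symm)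
          have hvb : G.Adj v b := hadjDv v hvDv b hbD (fun e => hbv e.symm)
          refine no_vpath hnocycle hvBc (x := ⟨a, haB⟩) (y := ⟨b, hbB⟩)
            (fun e => hne (congrArg Subtype.val e)) hva hvb
            (Walk.cons (by
              simp only [comap_adj, Function.Embedding.coe_subtype]; exact hab) Walk.nil) ?_
          intro z hz
          simp only [Walk.support_cons, Walk.support_nil, List.mem_cons,
            List.not_mem_nil, or_false] at hz
          rcases hz with rfl | rfl
          · exact fun h => hav h
          · exact fun h => hbv h
        have h2 : (Dv \ {v}).ncard ≤ B.ncard + 1 := by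
          have hsub2 : Dv \ {v} ⊆ B ∪ ((Dv \ {v}) \ B) := by
            intro z hz
            by_cases hzB : z ∈ B
            · exact Or.inl hzB
            · exact Or.inr ⟨hz, hzB⟩
          calc (Dv \ {v}).ncard ≤ (B ∪ ((Dv \ {v}) \ B)).ncard :=
              Set.ncard_le_ncard hsub2 (Set.toFinite _)
            _ ≤ B.ncard + ((Dv \ {v}) \ B).ncard := Set.ncard_union_le _ _
            _ ≤ B.ncard + 1 := by omega
        have hNcard : (G.neighborSet v).ncard
            ≤ ((Dv \ {v}).ncard + (G.neighborSet v ∩ Cv).ncard) + X.ncard := by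
          calc (G.neighborSet v).ncard
              ≤ (((Dv \ {v}) ∪ (G.neighborSet v ∩ Cv)) ∪ X).ncard :=
                Set.ncard_le_ncard hsub (Set.toFinite _)
            _ ≤ ((Dv \ {v}) ∪ (G.neighborSet v ∩ Cv)).ncard + X.ncard :=
                Set.ncard_union_le _ _
            _ ≤ ((Dv \ {v}).ncard + (G.neighborSet v ∩ Cv).ncard) + X.ncard :=
                Nat.add_le_add_right (Set.ncard_union_le _ _) _
        have h7 := hv.1
        omega
      · have htreeDv : (G.induce Dv).IsTree := by
          unfold CompIsTree at htrd
          exact isTree_of_iso (isoInduceInduce G Ws d.supp) htrd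
        have hsplit : Ws ∪ Cv = (Ws \ Dv) ∪ (Dv ∪ Cv) := by
          ext z
          constructor
          · rintro (hz | hz)
            · by_cases hzD : z ∈ Dv
              · exact Or.inr (Or.inl hzD)
              · exact Or.inl ⟨hz, hzD⟩
            · exact Or.inr (Or.inr hz)
          · rintro (⟨hz, _⟩ | (hz | hz))
            · exact Or.inl hz
            · exact Or.inl (hDvW hz)
            · exact Or.inr hz
        rw [hsplit]
        have hdisjDC : ∀ z, z ∈ Dv → z ∈ Cv → False := fun z hzD hzC => (hDvW hzD).1 hzC
        have hcross : ∀ x ∈ Dv, ∀ y ∈ Cv, G.Adj x y → x = v ∧ y = (u0 : V) := by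
          intro x hxD y hyC hadj
          rcases hclose y hyC x hadj.symm with hxC | hxv
          · exact absurd hxC (fun h => hdisjDC x hxD h)
          · exact ⟨hxv, huniq y hyC (hxv ▸ hadj)⟩
        apply cliquesOrTrees_union ?_ (cliquesOrTrees_mono Set.diff_subset hWg) ?_
        · intro x hx y hy hadj
          rcases hy with hyD | hyC
          · exact hx.2 (hDvClose x hx.1 y hyD hadj)
          · rcases hclose y hyC x hadj.symm with hxC | hxv
            · exact (hx.1).1 hxC
            · rw [hxv] at hx; exact hx.2 hvDv
        · apply cliquesOrTrees_of_connected_acyclic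
          · rw [connected_iff]
            refine ⟨?_, ⟨⟨v, Or.inl hvDv⟩⟩⟩
            have hreach : ∀ z : ↥(Dv ∪ Cv),
                (G.induce (Dv ∪ Cv)).Reachable z ⟨v, Or.inl hvDv⟩ := by
              rintro ⟨z, hz⟩
              rcases hz with hzD | hzC
              · obtain ⟨z', hz', hzeq⟩ := hzD
                subst hzeq
                obtain ⟨p⟩ := ConnectedComponent.exact
                  ((show (G.induce Ws).connectedComponentMk z' = d from hz').trans hd)
                have hsupp : ∀ t ∈ p.support, (t : V) ∈ Dv ∪ Cv := by
                  intro t ht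
                  refine Or.inl ⟨t, ?_, rfl⟩
                  rw [ConnectedComponent.mem_supp_iff, hd]
                  exact ConnectedComponent.sound (reachable_of_mem_support p ht)
                exact ⟨transferIW p hsupp (hsupp _ p.start_mem_support) (Or.inl hvDv)⟩
              · obtain ⟨z', hz', hzeq⟩ := hzC
                subst hzeq
                have hconn := ((isTree_iff _).mp htreeCv).1
                obtain ⟨p⟩ := hconn.preconnected ⟨↑z', ⟨z', hz', rfl⟩⟩ ⟨↑u0, huCv⟩
                have hw : (G.induce (Dv ∪ Cv)).Reachable ⟨↑z', Or.inr ⟨z', hz', rfl⟩⟩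
                    ⟨↑u0, Or.inr huCv⟩ :=
                  ⟨transferIW p (fun t _ => Or.inr t.2) (Or.inr ⟨z', hz', rfl⟩)
                    (Or.inr huCv)⟩
                have hadj : (G.induce (Dv ∪ Cv)).Adj ⟨↑u0, Or.inr huCv⟩ ⟨v, Or.inl hvDv⟩ := by
                  simp only [comap_adj, Function.Embedding.coe_subtype]
                  exact hu0adj.symm
                exact hw.trans hadj.reachable
            intro z1 z2
            exact (hreach z1).trans (hreach z2).symm
          · exact isAcyclic_glue hdisjDC hcross ((isTree_iff _).mp htreeDv).2
              ((isTree_iff _).mp htreeCv).2
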